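/- Assume μ_1 < 0 < μ_n (a mixed case). Then for every β ∈ ℝ \ {μ_1, …, μ_n}, one has (β − μ_j)·g(β) > 0 for all j = 1, …, n if and only if β < μ_1. -/
import Mathlib


open Set Finset

/-- Mixed case `μ₁ < 0 < μₙ`: the positivity condition `(β - μⱼ)·g(β) > 0` for all `j`
holds precisely for `β < μ₁`. -/
theorem mixed_branch_interval (n : ℕ) (hn : 2 ≤ n) (μ : Fin n → ℝ) (hμ : Monotone μ)
    (g : ℝ → ℝ)
    (hg : ∀ β : ℝ, (∀ j, β ≠ μ j) → g β = 1 + β * ∑ j, 1 / (μ j - β))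
    (hμ1 : μ ⟨0, by omega⟩ < 0) (hμn : 0 < μ ⟨n - 1, by omega⟩)
    (β : ℝ) (hβ : ∀ j, β ≠ μ j) :
    (∀ j, 0 < (β - μ j) * g β) ↔ β < μ ⟨0, by omega⟩ := by
  set i0 : Fin n := ⟨0, by omega⟩ with hi0
  set iN : Fin n := ⟨n - 1, by omega⟩ with hiN
  have hne : ∀ j, μ j - β ≠ 0 := fun j h => (hβ j) (by linarith [sub_eq_zero.mp h])
  -- key lemma: if each μⱼ/(μⱼ-β) < 1 and one of them is < 0, then g β < 0
  have key : ∀ (j₀ : Fin n), (∀ j, μ j / (μ j - β) < 1) → μ j₀ / (μ j₀ - β) < 0 →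
      g β < 0 := by
    intro j₀ h1 h2
    have hg' : g β = 1 - n + ∑ j, μ j / (μ j - β) := by
      rw [hg β hβ, Finset.mul_sum]
      have hc : ∀ j ∈ Finset.univ, β * (1 / (μ j - β)) = μ j / (μ j - β) - 1 := by
        intro j _
        rw [mul_one_div, div_sub_one (hne j)]
        congr 1
        ring
      rw [Finset.sum_congr rfl hc, Finset.sum_sub_distrib]
      simp [Finset.card_univ]
      ring
    have h3 : ∑ j, μ j / (μ j - β)
        = μ j₀ / (μ j₀ - β) + ∑ j ∈ Finset.univ.erase j₀, μ j / (μ j - β) :=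
      (Finset.add_sum_erase _ _ (Finset.mem_univ _)).symm
    have h4 : ∑ j ∈ Finset.univ.erase j₀, μ j / (μ j - β) ≤ (n : ℝ) - 1 := by
      have := Finset.sum_le_card_nsmul (Finset.univ.erase j₀)
        (fun j => μ j / (μ j - β)) 1 (fun x _ => (h1 x).le)
      have hcard : (Finset.univ.erase j₀).card = n - 1 := by
        rw [Finset.card_erase_of_mem (Finset.mem_univ _), Finset.card_univ, Fintype.card_fin]
      rw [hcard, nsmul_eq_mul, mul_one] at this
      have : ∑ j ∈ Finset.univ.erase j₀, μ j / (μ j - β) ≤ ((n - 1 : ℕ) : ℝ) := this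
      rwa [Nat.cast_sub (by omega), Nat.cast_one] at this
    rw [hg', h3]
    linarith
  constructor
  · intro hall
    by_contra hnot
    push_neg at hnot
    have h0 : μ i0 < β := lt_of_le_of_ne hnot (fun h => hβ i0 h.symm)
    have hgpos : 0 < g β := by
      have := hall i0
      nlinarith [this, sub_pos.mpr h0]
    rcases lt_or_gt_of_ne (hβ iN) with hlt | hgt
    · -- μ i0 < β < μ iN : product at iN is negative
      have := hall iN
      nlinarith [sub_neg.mpr hlt]
    · -- β > μ iN ≥ all μ j : g β < 0, contradiction
      have hall' : ∀ j, μ j < β := fun j =>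
        lt_of_le_of_lt (hμ (show j ≤ iN by simp [hiN, Fin.le_def]; omega)) hgt
      have hβpos : 0 < β := lt_trans hμn hgt
      have h1 : ∀ j, μ j / (μ j - β) < 1 := by
        intro j
        have hd : μ j - β < 0 := by linarith [hall' j]
        rw [div_lt_iff_of_neg hd]
        linarith
      have h2 : μ iN / (μ iN - β) < 0 :=
        div_neg_of_pos_of_neg hμn (by linarith [hall' iN])
      linarith [key iN h1 h2]
  · intro hlt j
    have hall' : ∀ j, β < μ j := fun j =>
      lt_of_lt_of_le hlt (hμ (show i0 ≤ j by simp [hi0, Fin.le_def]))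
    have hβneg : β < 0 := lt_trans hlt hμ1
    have h1 : ∀ j, μ j / (μ j - β) < 1 := by
      intro j
      have hd : 0 < μ j - β := by linarith [hall' j]
      rw [div_lt_one hd]
      linarith
    have h2 : μ i0 / (μ i0 - β) < 0 :=
      div_neg_of_neg_of_pos hμ1 (by linarith [hall' i0])
    have hgneg : g β < 0 := key i0 h1 h2
    have : β - μ j < 0 := by linarith [hall' j]
    nlinarith
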